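/- Let N be an odd positive integer and let C be a weakly self-dual cyclic binary code of length N with generator polynomial g(X). Then the number of nonzero coefficients of g(X) is divisible by four. -/

import Mathlib

open Polynomial

/-- Cyclic shift: `(c_0,…,c_{N-1}) ↦ (c_{N-1},c_0,…,c_{N-2})`. -/
def cshift {N : ℕ} {F : Type*} (c : Fin N → F) : Fin N → F :=
  fun i => c ((finRotate N).symm i)

/-- The code polynomial associated to a codeword. -/
noncomputable def toPoly {F : Type*} [Semiring F] {N : ℕ} (c : Fin N → F) : Polynomial F :=
  ∑ i, Polynomial.C (c i) * Polynomial.X ^ (i : ℕ)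

/-- The dual code of a linear code. -/
def dualCode {F : Type*} [CommRing F] {ι : Type*} [Fintype ι]
    (C : Submodule F (ι → F)) : Submodule F (ι → F) where
  carrier := { v | ∀ c ∈ C, ∑ i, c i * v i = 0 }
  zero_mem' := by intro c hc; simp
  add_mem' := by
    intro a b ha hb c hc
    simp [mul_add, Finset.sum_add_distrib, ha c hc, hb c hc]
  smul_mem' := by
    intro r a ha c hc
    simp [Pi.smul_apply, smul_eq_mul, mul_left_comm, ← Finset.mul_sum, ha c hc]

/-- `g` is the generator polynomial of `C`: the (unique) monic nonzero code
polynomial of least degree. -/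
def IsGenPoly {F : Type*} [Field F] {N : ℕ} (C : Submodule F (Fin N → F))
    (g : Polynomial F) : Prop :=
  g.Monic ∧ (∃ c ∈ C, toPoly c = g) ∧
    ∀ c ∈ C, toPoly c ≠ 0 → g.degree ≤ (toPoly c).degree

/-- For a weakly self-dual cyclic binary code of odd length with generator
polynomial g, the number of nonzero coefficients of g is divisible by four. -/
theorem stmt_1 (N : ℕ) (hN : 0 < N) (hodd : Odd N)
    (C : Submodule (ZMod 2) (Fin N → ZMod 2))
    (hcyc : ∀ c ∈ C, cshift c ∈ C)
    (hsd : C ≤ dualCode C)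
    (g : Polynomial (ZMod 2)) (hg : IsGenPoly C g) :
    4 ∣ g.support.card := by
  haveI : NeZero N := ⟨hN.ne'⟩
  obtain ⟨hmonic, ⟨c, hcC, hcg⟩, _⟩ := hg
  classical
  -- the shift formula
  have hshift : ∀ (f : Fin N → ZMod 2), cshift f = fun i => f (i - 1) := by
    intro f
    funext i
    obtain ⟨n, rfl⟩ := Nat.exists_eq_succ_of_ne_zero hN.ne'
    show f ((finRotate (n+1)).symm i) = f (i - 1)
    congr 1
    rw [Equiv.symm_apply_eq, finRotate_succ_apply, sub_add_cancel]
  -- all shifts of c are in C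
  open Fin.NatCast in
  have hmem : ∀ m : ℕ, (fun i : Fin N => c (i - (m : Fin N))) ∈ C := by
    intro m
    induction m with
    | zero => simpa using hcC
    | succ m ih =>
      have h2 := hcyc _ ih
      rw [hshift] at h2
      have heq : (fun i : Fin N => c (i - ((m+1 : ℕ) : Fin N)))
          = fun i : Fin N => c (i - 1 - (m : Fin N)) := by
        funext i; congr 1; push_cast; abel
      rw [heq]; exact h2
  -- orthogonality of c with all its shifts
  have horth : ∀ k : Fin N, ∑ i, c i * c (i - k) = 0 := by
    intro k
    have h1 : ∀ c' ∈ C, ∑ i, c' i * c i = 0 := hsd hcC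
    have h2 := h1 _ (hmem k.val)
    rw [Fin.cast_val_eq_self] at h2
    rw [← h2]
    exact Finset.sum_congr rfl fun i _ => mul_comm _ _
  -- the natural-number indicator of the support of c
  set b : Fin N → ℕ := fun i => if c i = 1 then 1 else 0 with hb
  have hzm : ∀ x : ZMod 2, x ≠ 1 → x = 0 := by decide
  have hbc : ∀ i, ((b i : ℕ) : ZMod 2) = c i := by
    intro i
    by_cases h : c i = 1 <;> simp [hb, h]
    exact (hzm _ h).symm
  have hbsq : ∀ i, b i * b i = b i := by
    intro i; by_cases h : c i = 1 <;> simp [hb, h]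
  set w : ℕ := ∑ i, b i with hw
  set n : Fin N → ℕ := fun k => ∑ i, b i * b (i - k) with hn
  -- each n k is even
  have heven : ∀ k, 2 ∣ n k := by
    intro k
    have : ((n k : ℕ) : ZMod 2) = 0 := by
      rw [hn]
      push_cast
      simp only [hbc]
      exact horth k
    exact (ZMod.natCast_eq_zero_iff _ _).mp this
  have hn0 : n 0 = w := by
    simp only [hn, sub_zero, hbsq, hw]
  -- symmetry
  have hsymm : ∀ k, n (-k) = n k := by
    intro k
    rw [hn]
    simp only [sub_neg_eq_add]
    exact Fintype.sum_equiv (Equiv.addRight k) _ _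
      (fun i => by simp [add_sub_cancel_right, mul_comm])
  -- total sum
  have htot : ∑ k : Fin N, n k = w * w := by
    simp only [hn]
    rw [Finset.sum_comm]
    have : ∀ i : Fin N, ∑ k : Fin N, b i * b (i - k) = b i * w := by
      intro i
      rw [← Finset.mul_sum]
      congr 1
      exact Fintype.sum_equiv (Equiv.subLeft i) _ _ (fun k => rfl)
    simp only [this, hw]
    rw [← Finset.sum_mul]
  -- -a = a implies a = 0 in Fin N for odd N
  have hfix : ∀ a : Fin N, -a = a → a = 0 := by
    intro a h
    have h2 : a + a = 0 := by nth_rewrite 1 [← h]; exact neg_add_cancel a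
    have h3 : ((a : ℕ) + (a : ℕ)) % N = 0 := by
      have := congrArg Fin.val h2
      rwa [Fin.add_def, Fin.val_zero] at this
    have h4 : N ∣ 2 * (a : ℕ) := by
      rw [two_mul]; exact Nat.dvd_of_mod_eq_zero h3
    have h5 : N ∣ (a : ℕ) := (Nat.Coprime.symm hodd.coprime_two_left).dvd_of_dvd_mul_left h4
    have h6 : (a : ℕ) = 0 := Nat.eq_zero_of_dvd_of_lt h5 a.isLt
    exact Fin.ext h6
  -- sum over nonzero k vanishes mod 4
  have hker : ∑ k ∈ Finset.univ.erase (0 : Fin N), ((n k : ℕ) : ZMod 4) = 0 := by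
    apply Finset.sum_involution (fun a _ => -a)
    · intro a _
      obtain ⟨m, hm⟩ := heven a
      rw [hsymm, hm]
      have : ((2 * m : ℕ) : ZMod 4) + ((2 * m : ℕ) : ZMod 4) = ((4 * m : ℕ) : ZMod 4) := by
        push_cast; ring
      rw [this]
      exact (ZMod.natCast_eq_zero_iff _ _).mpr ⟨m, rfl⟩
    · intro a ha _
      intro h
      exact (Finset.mem_erase.mp ha).1 (hfix a h)
    · intro a _; exact neg_neg a
    · intro a ha
      rw [Finset.mem_erase]
      refine ⟨fun h => (Finset.mem_erase.mp ha).1 ?_, Finset.mem_univ _⟩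
      rw [← neg_neg a, h, neg_zero]
  -- w * w ≡ w (mod 4)
  have h4 : ((w * w : ℕ) : ZMod 4) = ((w : ℕ) : ZMod 4) := by
    rw [← htot]
    push_cast
    rw [← Finset.add_sum_erase _ _ (Finset.mem_univ (0 : Fin N))]
    rw [hker, add_zero]
    norm_cast
    rw [hn0]
  -- w is even
  have hweven : 2 ∣ w := by rw [← hn0]; exact heven 0
  -- hence 4 ∣ w
  have hw4 : 4 ∣ w := by
    obtain ⟨m, hm⟩ := hweven
    have : ((w : ℕ) : ZMod 4) = 0 := by
      rw [← h4, hm]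
      have : 2 * m * (2 * m) = 4 * (m * m) := by ring
      rw [this]
      exact (ZMod.natCast_eq_zero_iff _ _).mpr ⟨m * m, rfl⟩
    exact (ZMod.natCast_eq_zero_iff _ _).mp this
  -- finally, g.support.card = w
  have hcoeff : ∀ m : ℕ, (toPoly c).coeff m = if h : m < N then c ⟨m, h⟩ else 0 := by
    intro m
    rw [toPoly, Polynomial.finset_sum_coeff]
    simp only [Polynomial.coeff_C_mul, Polynomial.coeff_X_pow, mul_ite, mul_one, mul_zero]
    split_ifs with h
    · rw [Finset.sum_eq_single (⟨m, h⟩ : Fin N)]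
      · simp
      · intro i _ hi
        have : m ≠ (i : ℕ) := fun he => hi (by apply Fin.ext; simp [← he])
        simp [this]
      · intro h'; exact absurd (Finset.mem_univ _) h'
    · apply Finset.sum_eq_zero
      intro i _
      have : m ≠ (i : ℕ) := fun he => h (he ▸ i.isLt)
      simp [this]
  have hsupp : g.support = (Finset.univ.filter fun i : Fin N => c i ≠ 0).image Fin.val := by
    ext m
    simp only [mem_support_iff, ← hcg, hcoeff, Finset.mem_image, Finset.mem_filter,
      Finset.mem_univ, true_and]
    constructor
    · intro h
      split_ifs at h with hlt
      · exact ⟨⟨m, hlt⟩, h, rfl⟩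
      · exact absurd rfl h
    · rintro ⟨i, hi, rfl⟩
      rw [dif_pos i.isLt]
      simpa using hi
  have hcard : g.support.card = w := by
    rw [hsupp, Finset.card_image_of_injective _ Fin.val_injective, Finset.card_filter, hw]
    apply Finset.sum_congr rfl
    intro i _
    by_cases h : c i = 1
    · simp [hb, h]
    · simp [hb, h, hzm _ h]
  rw [hcard]
  exact hw4
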